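/- Let X be a finitely ramified fractal and let d and d' be two undistorted metrics on X. Then d and d' are quasisymmetrically equivalent: there exists a homeomorphism η : [0,∞) → [0,∞) such that the identity map (X,d) → (X,d') is an η-quasisymmetry. -/

import Mathlib

open Set

/-- A finitely ramified cell structure on a topological space `X`: a locally finite,
level-indexed family of "cells", where each cell is compact, connected, with nonempty
interior, the unique `0`-cell is all of `X`, every `(n+1)`-cell lies in some `n`-cell,
each `n`-cell is the union of the `(n+1)`-cells it contains, two distinct cells of the
same level meet in a finite set, and every infinite descending chain of cells
intersects in a single point. -/
structure CellStructure (X : Type*) [TopologicalSpace X] where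
  cells : ℕ → Set (Set X)
  finite_cells : ∀ n, (cells n).Finite
  isCompact_cells : ∀ n, ∀ E ∈ cells n, IsCompact E
  isConnected_cells : ∀ n, ∀ E ∈ cells n, IsConnected E
  interior_nonempty : ∀ n, ∀ E ∈ cells n, (interior E).Nonempty
  root : cells 0 = {Set.univ}
  exists_parent : ∀ n, ∀ E' ∈ cells (n + 1), ∃ E ∈ cells n, E' ⊆ E
  eq_sUnion_children : ∀ n, ∀ E ∈ cells n, E = ⋃₀ {E' | E' ∈ cells (n + 1) ∧ E' ⊆ E}
  inter_finite : ∀ n, ∀ E₁ ∈ cells n, ∀ E₂ ∈ cells n, E₁ ≠ E₂ → (E₁ ∩ E₂).Finite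
  descending_singleton : ∀ E : ℕ → Set X, (∀ n, E n ∈ cells n) → (∀ n, E (n + 1) ⊆ E n) →
    ∃ p : X, (⋂ n, E n) = {p}

/-- `d` is a metric (distance function) on the set `X`. -/
def IsMetricOn {X : Type*} (d : X → X → ℝ) : Prop :=
  (∀ x y, 0 ≤ d x y) ∧ (∀ x y, d x y = 0 ↔ x = y) ∧ (∀ x y, d x y = d y x) ∧
    ∀ x y z, d x z ≤ d x y + d y z

/-- The distance function `d` induces the given topology on `X`. -/
def InducesTopology {X : Type*} [TopologicalSpace X] (d : X → X → ℝ) : Prop :=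
  ∀ s : Set X, IsOpen s ↔ ∀ x ∈ s, ∃ ε > 0, ∀ y, d x y < ε → y ∈ s

/-- The diameter of a set with respect to a distance function. -/
noncomputable def sdiam {X : Type*} (d : X → X → ℝ) (S : Set X) : ℝ :=
  sSup (Set.image2 d S S)

/-- The distance between two sets with respect to a distance function. -/
noncomputable def sdist {X : Type*} (d : X → X → ℝ) (S T : Set X) : ℝ :=
  sInf (Set.image2 d S T)

/-- The distance function `d` is `(r,R,C,δ)`-undistorted with respect to the family
of cells `cells`: exponential decay of diameter ratios of intersecting cells, and
cell separation for disjoint cells of the same level. -/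
def IsUndistortedWith {X : Type*} (cells : ℕ → Set (Set X)) (d : X → X → ℝ)
    (r R C δ : ℝ) : Prop :=
  0 < r ∧ r ≤ R ∧ R < 1 ∧ 1 ≤ C ∧ 0 < δ ∧
    (∀ m n : ℕ, m ≤ n → ∀ E ∈ cells m, ∀ E' ∈ cells n, (E ∩ E').Nonempty →
      r ^ (n - m) / C ≤ sdiam d E' / sdiam d E ∧
        sdiam d E' / sdiam d E ≤ C * R ^ (n - m)) ∧
    ∀ n : ℕ, ∀ E₁ ∈ cells n, ∀ E₂ ∈ cells n, Disjoint E₁ E₂ →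
      δ * sdiam d E₁ ≤ sdist d E₁ E₂

/-- `d` is undistorted if it is `(r,R,C,δ)`-undistorted for some constants. -/
def IsUndistorted {X : Type*} (cells : ℕ → Set (Set X)) (d : X → X → ℝ) : Prop :=
  ∃ r R C δ : ℝ, IsUndistortedWith cells d r R C δ

/-- `η` is a homeomorphism of `[0,∞)` onto itself (equivalently: a continuous,
strictly increasing surjection of `[0,∞)` onto `[0,∞)` fixing `0`). -/
def IsQSGauge (η : ℝ → ℝ) : Prop :=
  ContinuousOn η (Set.Ici 0) ∧ StrictMonoOn η (Set.Ici 0) ∧ η 0 = 0 ∧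
    Set.MapsTo η (Set.Ici 0) (Set.Ici 0) ∧ Set.SurjOn η (Set.Ici 0) (Set.Ici 0)

/-- The `η`-quasisymmetry inequality for a map `f` between sets carrying
distance functions `dX` and `dY`. -/
def QSIneq {X Y : Type*} (dX : X → X → ℝ) (dY : Y → Y → ℝ) (f : X → Y) (η : ℝ → ℝ) : Prop :=
  ∀ a b c : X, a ≠ b → a ≠ c → b ≠ c →
    dY (f a) (f b) / dY (f a) (f c) ≤ η (dX a b / dX a c)


section Aux
variable {X : Type*} [TopologicalSpace X]

lemma aux_cover (CS : CellStructure X) (n : ℕ) (x : X) : ∃ E ∈ CS.cells n, x ∈ E := by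
  induction n with
  | zero => exact ⟨univ, by rw [CS.root]; exact mem_singleton _, mem_univ x⟩
  | succ n ih =>
    obtain ⟨E, hE, hx⟩ := ih
    rw [CS.eq_sUnion_children n E hE] at hx
    obtain ⟨E', ⟨hE', -⟩, hx'⟩ := hx
    exact ⟨E', hE', hx'⟩

lemma aux_cont (d : X → X → ℝ) (hmet : IsMetricOn d) (htop : InducesTopology d) :
    Continuous (fun p : X × X => d p.1 p.2) := by
  obtain ⟨h0, heq, hsymm, htri⟩ := hmet
  rw [continuous_iff_continuousAt]
  rintro ⟨x₀, y₀⟩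
  rw [ContinuousAt, Metric.tendsto_nhds]
  intro ε hε
  have hopen : ∀ z : X, IsOpen {x | d z x < ε / 2} := by
    intro z
    rw [htop]
    intro x hx
    refine ⟨ε / 2 - d z x, by simp only [mem_setOf_eq] at hx; linarith, fun y hy => ?_⟩
    simp only [mem_setOf_eq] at *
    have := htri z x y
    linarith
  have hmem : {x | d x₀ x < ε / 2} ×ˢ {y | d y₀ y < ε / 2} ∈ nhds (x₀, y₀) := by
    refine ((hopen x₀).prod (hopen y₀)).mem_nhds ?_
    constructor <;> simp only [mem_setOf_eq] <;>
      [rw [(heq x₀ x₀).2 rfl]; rw [(heq y₀ y₀).2 rfl]] <;> linarith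
  filter_upwards [hmem] with p hp
  obtain ⟨hp1, hp2⟩ := hp
  simp only [mem_setOf_eq] at hp1 hp2
  rw [Real.dist_eq, abs_lt]
  have t0 := htri x₀ p.1 y₀
  have t5 := htri p.1 x₀ p.2
  have t1 := htri p.1 x₀ y₀
  have t2 := htri x₀ y₀ p.2
  have t3 := htri x₀ p.1 p.2
  have t4 := htri p.1 p.2 y₀
  have s1 := hsymm x₀ p.1
  have s2 := hsymm y₀ p.2
  have s3 := hsymm p.2 y₀
  constructor <;> linarith

lemma aux_bdd [CompactSpace X] (d : X → X → ℝ) (hmet : IsMetricOn d)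
    (htop : InducesTopology d) : BddAbove (Set.image2 d (univ : Set X) univ) := by
  rw [← Set.image_uncurry_prod]
  exact ((isCompact_univ.prod isCompact_univ).image (aux_cont d hmet htop)).bddAbove

lemma aux_le_sdiam {d : X → X → ℝ} (hbdd : BddAbove (Set.image2 d (univ : Set X) univ))
    {S : Set X} {x y : X} (hx : x ∈ S) (hy : y ∈ S) : d x y ≤ sdiam d S :=
  le_csSup (hbdd.mono (Set.image2_subset (subset_univ S) (subset_univ S)))
    (Set.mem_image2_of_mem hx hy)

lemma aux_sdist_le {d : X → X → ℝ} (h0 : ∀ x y, 0 ≤ d x y)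
    {S T : Set X} {x y : X} (hx : x ∈ S) (hy : y ∈ T) : sdist d S T ≤ d x y :=
  csInf_le ⟨0, by rintro z ⟨u, hu, v, hv, rfl⟩; exact h0 u v⟩ (Set.mem_image2_of_mem hx hy)

end Aux

section Aux2
variable {X : Type*} [TopologicalSpace X] {CS : CellStructure X} {d : X → X → ℝ} {r R C δ : ℝ}

/-- Adjacency of two points at level `n`: they lie in intersecting `n`-cells.
This is purely combinatorial (metric independent). -/
def Adj (CS : CellStructure X) (n : ℕ) (x y : X) : Prop :=
  ∃ E₁ ∈ CS.cells n, ∃ E₂ ∈ CS.cells n, x ∈ E₁ ∧ y ∈ E₂ ∧ (E₁ ∩ E₂).Nonempty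

lemma aux_univ_mem (CS : CellStructure X) : univ ∈ CS.cells 0 := by
  rw [CS.root]; exact mem_singleton _

lemma aux_adj_zero (CS : CellStructure X) (x y : X) : Adj CS 0 x y :=
  ⟨univ, aux_univ_mem CS, univ, aux_univ_mem CS, mem_univ x, mem_univ y,
    ⟨x, mem_univ x, mem_univ x⟩⟩

lemma aux_adj_succ {n : ℕ} {x y : X} (h : Adj CS (n + 1) x y) : Adj CS n x y := by
  obtain ⟨E₁, hE₁, E₂, hE₂, hx, hy, z, hz₁, hz₂⟩ := h
  obtain ⟨F₁, hF₁, hs₁⟩ := CS.exists_parent n E₁ hE₁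
  obtain ⟨F₂, hF₂, hs₂⟩ := CS.exists_parent n E₂ hE₂
  exact ⟨F₁, hF₁, F₂, hF₂, hs₁ hx, hs₂ hy, ⟨z, hs₁ hz₁, hs₂ hz₂⟩⟩

lemma aux_adj_add {m : ℕ} {x y : X} : ∀ k, Adj CS (m + k) x y → Adj CS m x y
  | 0, h => h
  | k + 1, h => aux_adj_add k (aux_adj_succ h)

lemma aux_adj_le {m n : ℕ} {x y : X} (hmn : m ≤ n) (h : Adj CS n x y) : Adj CS m x y := by
  obtain ⟨k, rfl⟩ := Nat.exists_eq_add_of_le hmn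
  exact aux_adj_add k h

lemma aux_D_pos [Nonempty X] (hmet : IsMetricOn d)
    (hbdd : BddAbove (Set.image2 d (univ : Set X) univ))
    (hund : IsUndistortedWith CS.cells d r R C δ) : 0 < sdiam d univ := by
  obtain ⟨h0, heq, -, -⟩ := hmet
  obtain ⟨-, -, -, hC, -, hdecay, -⟩ := hund
  rcases lt_or_eq_of_le (le_trans ((heq (Classical.arbitrary X) (Classical.arbitrary X)).2 rfl).ge
      (aux_le_sdiam hbdd (mem_univ _) (mem_univ _))) with h | h
  · exact h
  exfalso
  have := (hdecay 0 0 le_rfl univ (aux_univ_mem CS) univ (aux_univ_mem CS)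
      ⟨Classical.arbitrary X, mem_univ _, mem_univ _⟩).1
  rw [← h] at this
  simp only [Nat.sub_self, pow_zero, div_zero] at this
  have hC0 : (0:ℝ) < C := lt_of_lt_of_le one_pos hC
  rw [div_le_iff₀ hC0] at this
  linarith

lemma aux_cell_bounds (hund : IsUndistortedWith CS.cells d r R C δ)
    (hD : 0 < sdiam d univ) {n : ℕ} {E : Set X} (hE : E ∈ CS.cells n) {x : X} (hx : x ∈ E) :
    r ^ n / C * sdiam d univ ≤ sdiam d E ∧ sdiam d E ≤ C * R ^ n * sdiam d univ := by
  obtain ⟨-, -, -, -, -, hdecay, -⟩ := hund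
  have h := hdecay 0 n (Nat.zero_le n) univ (aux_univ_mem CS) E hE ⟨x, mem_univ x, hx⟩
  rw [Nat.sub_zero] at h
  exact ⟨(le_div_iff₀ hD).1 h.1, by have := (div_le_iff₀ hD).1 h.2; linarith⟩

lemma aux_cell_pos (hund : IsUndistortedWith CS.cells d r R C δ)
    (hD : 0 < sdiam d univ) {n : ℕ} {E : Set X} (hE : E ∈ CS.cells n) {x : X} (hx : x ∈ E) :
    0 < sdiam d E := by
  refine lt_of_lt_of_le ?_ (aux_cell_bounds hund hD hE hx).1
  have hr := hund.1
  have hC : (0:ℝ) < C := lt_of_lt_of_le one_pos hund.2.2.2.1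
  positivity

lemma aux_cross (hund : IsUndistortedWith CS.cells d r R C δ) (hD : 0 < sdiam d univ)
    {p q : ℕ} {P Q : Set X} {a : X} (hpq : p ≤ q) (hP : P ∈ CS.cells p) (hQ : Q ∈ CS.cells q)
    (haP : a ∈ P) (haQ : a ∈ Q) :
    r ^ (q - p) / C * sdiam d P ≤ sdiam d Q ∧ sdiam d Q ≤ C * R ^ (q - p) * sdiam d P := by
  have hPpos := aux_cell_pos hund hD hP haP
  have h := hund.2.2.2.2.2.1 p q hpq P hP Q hQ ⟨a, haP, haQ⟩
  exact ⟨(le_div_iff₀ hPpos).1 h.1, by have := (div_le_iff₀ hPpos).1 h.2; linarith⟩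

lemma aux_adj_ub (hmet : IsMetricOn d) (hbdd : BddAbove (Set.image2 d (univ : Set X) univ))
    (hund : IsUndistortedWith CS.cells d r R C δ) (hD : 0 < sdiam d univ)
    {n : ℕ} {x y : X} (h : Adj CS n x y) :
    d x y ≤ 2 * (C * R ^ n * sdiam d univ) := by
  obtain ⟨E₁, hE₁, E₂, hE₂, hx, hy, z, hz₁, hz₂⟩ := h
  have t := hmet.2.2.2 x z y
  have b1 := aux_le_sdiam hbdd hx hz₁
  have b2 := aux_le_sdiam hbdd hz₂ hy
  have c1 := (aux_cell_bounds hund hD hE₁ hx).2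
  have c2 := (aux_cell_bounds hund hD hE₂ hy).2
  linarith

lemma aux_exists_scale (hmet : IsMetricOn d)
    (hbdd : BddAbove (Set.image2 d (univ : Set X) univ))
    (hund : IsUndistortedWith CS.cells d r R C δ) (hD : 0 < sdiam d univ)
    {x y : X} (hxy : x ≠ y) :
    ∃ m, Adj CS m x y ∧ ¬ Adj CS (m + 1) x y := by
  classical
  have hd : 0 < d x y :=
    lt_of_le_of_ne (hmet.1 x y) (fun h => hxy ((hmet.2.1 x y).1 h.symm))
  have hC : (0:ℝ) < C := lt_of_lt_of_le one_pos hund.2.2.2.1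
  have hCD : (0:ℝ) < 2 * (C * sdiam d univ) := by positivity
  obtain ⟨N, hN⟩ := exists_pow_lt_of_lt_one (show (0:ℝ) < d x y / (2 * (C * sdiam d univ))
    by positivity) hund.2.2.1
  have hNadj : ¬ Adj CS N x y := by
    intro h
    have hub := aux_adj_ub hmet hbdd hund hD h
    rw [lt_div_iff₀ hCD] at hN
    nlinarith
  have hex : ∃ n, ¬ Adj CS n x y := ⟨N, hNadj⟩
  have hk := Nat.find_spec hex
  have hk0 : Nat.find hex ≠ 0 := by
    intro h
    exact (h ▸ hk) (aux_adj_zero CS x y)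
  obtain ⟨m, hm⟩ : ∃ m, Nat.find hex = m + 1 :=
    ⟨Nat.find hex - 1, (Nat.succ_pred_eq_of_ne_zero hk0).symm⟩
  refine ⟨m, ?_, hm ▸ hk⟩
  by_contra h
  exact Nat.find_min hex (show m < Nat.find hex by omega) h

lemma aux_pair_ub (hmet : IsMetricOn d)
    (hbdd : BddAbove (Set.image2 d (univ : Set X) univ))
    (hund : IsUndistortedWith CS.cells d r R C δ) (hD : 0 < sdiam d univ)
    {n : ℕ} {x y : X} (h : Adj CS n x y) :
    ∃ E ∈ CS.cells n, x ∈ E ∧ d x y ≤ (1 + C) * sdiam d E := by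
  obtain ⟨E₁, hE₁, E₂, hE₂, hx, hy, z, hz₁, hz₂⟩ := h
  refine ⟨E₁, hE₁, hx, ?_⟩
  have hpos := aux_cell_pos hund hD hE₁ hx
  have h2 : sdiam d E₂ ≤ C * sdiam d E₁ := by
    have h := (hund.2.2.2.2.2.1 n n le_rfl E₁ hE₁ E₂ hE₂ ⟨z, hz₁, hz₂⟩).2
    rw [Nat.sub_self, pow_zero, mul_one] at h
    exact by have := (div_le_iff₀ hpos).1 h; linarith
  have t := hmet.2.2.2 x z y
  have b1 := aux_le_sdiam hbdd hx hz₁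
  have b2 := aux_le_sdiam hbdd hz₂ hy
  linarith

lemma aux_pair_lb (hmet : IsMetricOn d)
    (hund : IsUndistortedWith CS.cells d r R C δ)
    {n : ℕ} {x y : X} (h : ¬ Adj CS n x y) {E F : Set X}
    (hE : E ∈ CS.cells n) (hxE : x ∈ E) (hF : F ∈ CS.cells n) (hyF : y ∈ F) :
    δ * sdiam d E ≤ d x y := by
  have hdisj : Disjoint E F := by
    by_contra hnd
    rw [Set.not_disjoint_iff_nonempty_inter] at hnd
    exact h ⟨E, hE, F, hF, hxE, hyF, hnd⟩
  exact le_trans (hund.2.2.2.2.2.2 n E hE F hF hdisj) (aux_sdist_le hmet.1 hxE hyF)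

end Aux2

lemma aux_pow_rpow {r s : ℝ} (hr0 : 0 < r) (hr1 : r ≠ 1) (hs0 : 0 < s) (k : ℕ) :
    s ^ k = ((r ^ k : ℝ)) ^ (Real.log s / Real.log r) := by
  have hlr : Real.log r ≠ 0 := by
    intro h
    rcases Real.log_eq_zero.1 h with h' | h' | h' <;> [linarith; exact hr1 h'; linarith]
  have key : r ^ (Real.log s / Real.log r) = s := by
    rw [Real.rpow_def_of_pos hr0, mul_comm, div_mul_cancel₀ _ hlr, Real.exp_log hs0]
  calc s ^ k = (r ^ (Real.log s / Real.log r)) ^ k := by rw [key]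
    _ = ((r ^ k : ℝ)) ^ (Real.log s / Real.log r) := by
        rw [← Real.rpow_natCast (r ^ (Real.log s / Real.log r)) k,
          ← Real.rpow_natCast r k, ← Real.rpow_mul hr0.le, ← Real.rpow_mul hr0.le, mul_comm]

lemma aux_gauge {Ma Mb α β : ℝ} (hMa : 0 < Ma) (hMb : 0 < Mb) (hα : 0 < α) (hβ : 0 < β) :
    IsQSGauge (fun t => Ma * t ^ α + Mb * t ^ β) := by
  have c1 : ContinuousOn (fun t : ℝ => t ^ α) (Set.Ici 0) := fun x _ =>
    (Real.continuousAt_rpow_const x α (Or.inr hα.le)).continuousWithinAt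
  have c2 : ContinuousOn (fun t : ℝ => t ^ β) (Set.Ici 0) := fun x _ =>
    (Real.continuousAt_rpow_const x β (Or.inr hβ.le)).continuousWithinAt
  have hcont : ContinuousOn (fun t : ℝ => Ma * t ^ α + Mb * t ^ β) (Set.Ici 0) :=
    (continuousOn_const.mul c1).add (continuousOn_const.mul c2)
  have h00 : Ma * (0:ℝ) ^ α + Mb * (0:ℝ) ^ β = 0 := by
    rw [Real.zero_rpow hα.ne', Real.zero_rpow hβ.ne']; ring
  refine ⟨hcont, ?_, h00, ?_, ?_⟩
  · intro x hx y hy hxy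
    have h1 := Real.rpow_lt_rpow hx hxy hα
    have h2 := Real.rpow_lt_rpow hx hxy hβ
    exact add_lt_add (mul_lt_mul_of_pos_left h1 hMa) (mul_lt_mul_of_pos_left h2 hMb)
  · intro x hx
    exact add_nonneg (mul_nonneg hMa.le (Real.rpow_nonneg hx α))
      (mul_nonneg hMb.le (Real.rpow_nonneg hx β))
  · intro y hy
    rw [Set.mem_Ici] at hy
    set T := (y / Ma) ^ (1/α) with hT
    have hyMa : 0 ≤ y / Ma := div_nonneg hy hMa.le
    have hT0 : (0:ℝ) ≤ T := Real.rpow_nonneg hyMa _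
    have hTα : Ma * T ^ α = y := by
      rw [hT, ← Real.rpow_mul hyMa, one_div, inv_mul_cancel₀ hα.ne', Real.rpow_one,
        mul_comm, div_mul_cancel₀ _ hMa.ne']
    have hle : y ≤ Ma * T ^ α + Mb * T ^ β := by
      nlinarith [Real.rpow_nonneg hT0 β]
    have hmem : y ∈ Set.Icc (Ma * (0:ℝ) ^ α + Mb * (0:ℝ) ^ β) (Ma * T ^ α + Mb * T ^ β) :=
      ⟨by rw [h00]; exact hy, hle⟩
    obtain ⟨x, hx, hfx⟩ := intermediate_value_Icc hT0 (hcont.mono Set.Icc_subset_Ici_self) hmem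
    exact ⟨x, hx.1, hfx⟩

set_option maxHeartbeats 1000000

/-- Any two undistorted metrics on a finitely ramified fractal are
quasisymmetrically equivalent: the identity map is an `η`-quasisymmetry for some
homeomorphism `η` of `[0,∞)`. -/
theorem stmt2 {X : Type*} [TopologicalSpace X] [CompactSpace X] [ConnectedSpace X]
    [TopologicalSpace.MetrizableSpace X] (CS : CellStructure X) (d d' : X → X → ℝ)
    (hmet : IsMetricOn d) (htop : InducesTopology d)
    (hmet' : IsMetricOn d') (htop' : InducesTopology d')
    (hund : IsUndistorted CS.cells d) (hund' : IsUndistorted CS.cells d') :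
    ∃ η : ℝ → ℝ, IsQSGauge η ∧ QSIneq d d' (fun x : X => x) η := by
  obtain ⟨r, R, C, δ, hu⟩ := hund
  obtain ⟨r', R', C', δ', hu'⟩ := hund'
  have hr : 0 < r := hu.1
  have hrR : r ≤ R := hu.2.1
  have hR1 : R < 1 := hu.2.2.1
  have hC1 : 1 ≤ C := hu.2.2.2.1
  have hδ : 0 < δ := hu.2.2.2.2.1
  have hC0 : (0:ℝ) < C := lt_of_lt_of_le one_pos hC1
  have hR0 : 0 < R := lt_of_lt_of_le hr hrR
  have hr1 : r < 1 := lt_of_le_of_lt hrR hR1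
  have h1C : (0:ℝ) < 1 + C := by linarith
  have hr' : 0 < r' := hu'.1
  have hrR' : r' ≤ R' := hu'.2.1
  have hR1' : R' < 1 := hu'.2.2.1
  have hC1' : 1 ≤ C' := hu'.2.2.2.1
  have hδ' : 0 < δ' := hu'.2.2.2.2.1
  have hC0' : (0:ℝ) < C' := lt_of_lt_of_le one_pos hC1'
  have hR0' : 0 < R' := lt_of_lt_of_le hr' hrR'
  have hr1' : r' < 1 := lt_of_le_of_lt hrR' hR1'
  have h1C' : (0:ℝ) < 1 + C' := by linarith
  have hbdd := aux_bdd d hmet htop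
  have hbdd' := aux_bdd d' hmet' htop'
  have hD : 0 < sdiam d univ := aux_D_pos hmet hbdd hu
  have hD' : 0 < sdiam d' univ := aux_D_pos hmet' hbdd' hu'
  set α := Real.log R' / Real.log r with hαdef
  have hα : 0 < α := div_pos_iff.2 (Or.inr ⟨Real.log_neg hR0' hR1', Real.log_neg hr hr1⟩)
  set β := Real.log (1/r') / Real.log (1/R) with hβdef
  have hβ : 0 < β :=
    div_pos (Real.log_pos (one_lt_one_div hr' hr1')) (Real.log_pos (one_lt_one_div hR0 hR1))
  set K₁ := δ * r / (C * (1 + C)) with hK₁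
  set K₃ := δ * R / (C * (1 + C)) with hK₃
  set M₂ := (1 + C') * C' / (δ' * r') with hM₂
  have hK₁pos : 0 < K₁ := by rw [hK₁]; positivity
  have hK₃pos : 0 < K₃ := by rw [hK₃]; positivity
  have hM₂pos : 0 < M₂ := by rw [hM₂]; positivity
  set Ma := M₂ / K₁ ^ α with hMa
  set Mb := M₂ / K₃ ^ β with hMb
  have hMapos : 0 < Ma := div_pos hM₂pos (Real.rpow_pos_of_pos hK₁pos α)
  have hMbpos : 0 < Mb := div_pos hM₂pos (Real.rpow_pos_of_pos hK₃pos β)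
  refine ⟨fun t => Ma * t ^ α + Mb * t ^ β, aux_gauge hMapos hMbpos hα hβ, ?_⟩
  intro a b c hab hac hbc
  obtain ⟨m1, hm1, hm1'⟩ := aux_exists_scale hmet hbdd hu hD hab
  obtain ⟨m2, hm2, hm2'⟩ := aux_exists_scale hmet hbdd hu hD hac
  obtain ⟨F1, hF1c, haF1⟩ := aux_cover CS (m1+1) a
  obtain ⟨G1, hG1c, hbG1⟩ := aux_cover CS (m1+1) b
  have hdab_lb : δ * sdiam d F1 ≤ d a b := aux_pair_lb hmet hu hm1' hF1c haF1 hG1c hbG1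
  obtain ⟨E2, hE2c, haE2, hdac_ub⟩ := aux_pair_ub hmet hbdd hu hD hm2
  obtain ⟨E1', hE1c', haE1', hdab_ub'⟩ := aux_pair_ub hmet' hbdd' hu' hD' hm1
  obtain ⟨F2, hF2c, haF2⟩ := aux_cover CS (m2+1) a
  obtain ⟨G2, hG2c, hcG2⟩ := aux_cover CS (m2+1) c
  have hdac_lb' : δ' * sdiam d' F2 ≤ d' a c := aux_pair_lb hmet' hu' hm2' hF2c haF2 hG2c hcG2
  have hF1pos := aux_cell_pos hu hD hF1c haF1
  have hE2pos := aux_cell_pos hu hD hE2c haE2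
  have hE1pos' := aux_cell_pos hu' hD' hE1c' haE1'
  have hF2pos' := aux_cell_pos hu' hD' hF2c haF2
  have hdab : 0 < d a b :=
    lt_of_le_of_ne (hmet.1 a b) (fun h => hab ((hmet.2.1 a b).1 h.symm))
  have hdac : 0 < d a c :=
    lt_of_le_of_ne (hmet.1 a c) (fun h => hac ((hmet.2.1 a c).1 h.symm))
  have hdac' : 0 < d' a c :=
    lt_of_le_of_ne (hmet'.1 a c) (fun h => hac ((hmet'.2.1 a c).1 h.symm))
  show d' a b / d' a c ≤ Ma * (d a b / d a c) ^ α + Mb * (d a b / d a c) ^ β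
  set t := d a b / d a c with ht
  have ht0 : 0 < t := div_pos hdab hdac
  rcases le_or_gt m2 m1 with hcase | hcase
  · -- Case A : m2 ≤ m1
    set k := m1 - m2 with hk
    have cross1 : r ^ (k+1) / C * sdiam d E2 ≤ sdiam d F1 := by
      have h := (aux_cross hu hD (show m2 ≤ m1 + 1 by omega) hE2c hF1c haE2 haF1).1
      rwa [show m1 + 1 - m2 = k + 1 by omega] at h
    have htlb : K₁ * r ^ k ≤ t := by
      rw [ht, le_div_iff₀ hdac]
      calc K₁ * r ^ k * d a c ≤ K₁ * r ^ k * ((1 + C) * sdiam d E2) :=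
            mul_le_mul_of_nonneg_left hdac_ub (by positivity)
        _ = δ * (r ^ (k+1) / C * sdiam d E2) := by
            rw [hK₁, pow_succ]; field_simp
        _ ≤ δ * sdiam d F1 := mul_le_mul_of_nonneg_left cross1 hδ.le
        _ ≤ d a b := hdab_lb
    have cross2 : sdiam d' E1' ≤ C' / r' * R' ^ k * sdiam d' F2 := by
      rcases eq_or_lt_of_le hcase with heq2 | hlt2
      · have h := (aux_cross hu' hD' (show m1 ≤ m2 + 1 by omega) hE1c' hF2c haE1' haF2).1
        rw [show m2 + 1 - m1 = 1 by omega, pow_one] at h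
        rw [div_mul_eq_mul_div, div_le_iff₀ hC0'] at h
        rw [show k = 0 by omega, pow_zero, mul_one, div_mul_eq_mul_div, le_div_iff₀ hr']
        linarith
      · have h := (aux_cross hu' hD' (show m2 + 1 ≤ m1 by omega) hF2c hE1c' haF2 haE1').2
        rw [show m1 - (m2+1) = k - 1 by omega] at h
        refine h.trans (mul_le_mul_of_nonneg_right ?_ (le_of_lt hF2pos'))
        rw [show R' ^ k = R' ^ (k-1) * R' by rw [← pow_succ]; congr 1; omega]
        have hpow : (0:ℝ) ≤ R' ^ (k-1) := by positivity
        rw [div_mul_eq_mul_div, le_div_iff₀ hr']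
        nlinarith
    have hratio_ub : d' a b / d' a c ≤ M₂ * R' ^ k := by
      rw [div_le_iff₀ hdac']
      calc d' a b ≤ (1 + C') * sdiam d' E1' := hdab_ub'
        _ ≤ (1 + C') * (C' / r' * R' ^ k * sdiam d' F2) :=
            mul_le_mul_of_nonneg_left cross2 (by positivity)
        _ = M₂ * R' ^ k * (δ' * sdiam d' F2) := by
            rw [hM₂]; field_simp
        _ ≤ M₂ * R' ^ k * d' a c :=
            mul_le_mul_of_nonneg_left hdac_lb' (by positivity)
    have hrpow : R' ^ k = ((r ^ k : ℝ)) ^ α := aux_pow_rpow hr hr1.ne hR0' k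
    rw [mul_comm] at htlb
    have hrk : (r:ℝ) ^ k ≤ t / K₁ := (le_div_iff₀ hK₁pos).2 htlb
    have hfin : R' ^ k ≤ (t / K₁) ^ α := by
      rw [hrpow]; exact Real.rpow_le_rpow (by positivity) hrk hα.le
    calc d' a b / d' a c ≤ M₂ * R' ^ k := hratio_ub
      _ ≤ M₂ * ((t / K₁) ^ α) := mul_le_mul_of_nonneg_left hfin hM₂pos.le
      _ = Ma * t ^ α := by
          rw [Real.div_rpow ht0.le hK₁pos.le, hMa]; ring
      _ ≤ Ma * t ^ α + Mb * t ^ β :=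
          le_add_of_nonneg_right (mul_nonneg hMbpos.le (Real.rpow_nonneg ht0.le β))
  · -- Case B : m1 < m2
    set j := m2 - m1 with hj
    have hj1 : 1 ≤ j := by omega
    have cross1 : sdiam d E2 ≤ C * R ^ (j-1) * sdiam d F1 := by
      have h := (aux_cross hu hD (show m1 + 1 ≤ m2 by omega) hF1c hE2c haF1 haE2).2
      rwa [show m2 - (m1+1) = j - 1 by omega] at h
    have htlb : K₃ * (1/R) ^ j ≤ t := by
      rw [ht, le_div_iff₀ hdac]
      calc K₃ * (1/R) ^ j * d a c ≤ K₃ * (1/R) ^ j * ((1 + C) * sdiam d E2) :=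
            mul_le_mul_of_nonneg_left hdac_ub (by positivity)
        _ ≤ K₃ * (1/R) ^ j * ((1 + C) * (C * R ^ (j-1) * sdiam d F1)) :=
            mul_le_mul_of_nonneg_left
              (mul_le_mul_of_nonneg_left cross1 h1C.le) (by positivity)
        _ = δ * sdiam d F1 := by
            rw [hK₃, one_div, inv_pow, show R ^ j = R ^ (j-1) * R by
              rw [← pow_succ]; congr 1; omega]
            have hRj : (0:ℝ) < R ^ (j-1) := by positivity
            field_simp
        _ ≤ d a b := hdab_lb
    have cross2 : sdiam d' E1' ≤ C' / r' ^ (j+1) * sdiam d' F2 := by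
      have h := (aux_cross hu' hD' (show m1 ≤ m2 + 1 by omega) hE1c' hF2c haE1' haF2).1
      rw [show m2 + 1 - m1 = j + 1 by omega] at h
      rw [div_mul_eq_mul_div, div_le_iff₀ hC0'] at h
      rw [div_mul_eq_mul_div, le_div_iff₀ (pow_pos hr' (j+1))]
      linarith
    have hratio_ub : d' a b / d' a c ≤ M₂ * (1/r') ^ j := by
      rw [div_le_iff₀ hdac']
      calc d' a b ≤ (1 + C') * sdiam d' E1' := hdab_ub'
        _ ≤ (1 + C') * (C' / r' ^ (j+1) * sdiam d' F2) :=
            mul_le_mul_of_nonneg_left cross2 (by positivity)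
        _ = M₂ * (1/r') ^ j * (δ' * sdiam d' F2) := by
            rw [hM₂, one_div, inv_pow, pow_succ]
            have hrj : (0:ℝ) < r' ^ j := by positivity
            field_simp
        _ ≤ M₂ * (1/r') ^ j * d' a c :=
            mul_le_mul_of_nonneg_left hdac_lb' (by positivity)
    have hrpow : (1/r' : ℝ) ^ j = (((1/R : ℝ) ^ j : ℝ)) ^ β :=
      aux_pow_rpow (by positivity) (ne_of_gt (one_lt_one_div hR0 hR1)) (by positivity) j
    rw [mul_comm] at htlb
    have hrk : ((1/R : ℝ)) ^ j ≤ t / K₃ := (le_div_iff₀ hK₃pos).2 htlb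
    have hfin : (1/r' : ℝ) ^ j ≤ (t / K₃) ^ β := by
      rw [hrpow]; exact Real.rpow_le_rpow (by positivity) hrk hβ.le
    calc d' a b / d' a c ≤ M₂ * (1/r') ^ j := hratio_ub
      _ ≤ M₂ * ((t / K₃) ^ β) := mul_le_mul_of_nonneg_left hfin hM₂pos.le
      _ = Mb * t ^ β := by
          rw [Real.div_rpow ht0.le hK₃pos.le, hMb]; ring
      _ ≤ Ma * t ^ α + Mb * t ^ β :=
          le_add_of_nonneg_left (mul_nonneg hMapos.le (Real.rpow_nonneg ht0.le α))
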